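/- Let H, K, Q be subgroups of a group G. Then Q·H ∩ Q·K = Q·(H ∩ K) holds if and only if for all x, y, z in G, whenever the cosets Qx, Hy, Kz pairwise intersect nontrivially, their triple intersection Qx ∩ Hy ∩ Kz is nonempty. -/

import Mathlib

open Pointwise

/-- The right coset `A·x` of a subset `A` of a group. -/
def rightCosetSet {G : Type*} [Group G] (A : Set G) (x : G) : Set G :=
  (fun a => a * x) '' A

theorem stmt_1 {G : Type*} [Group G] (H K Q : Subgroup G) :
    ((Q : Set G) * (H : Set G)) ∩ ((Q : Set G) * (K : Set G)) =
      (Q : Set G) * ((H : Set G) ∩ (K : Set G)) ↔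
    ∀ x y z : G,
      (rightCosetSet (Q : Set G) x ∩ rightCosetSet (H : Set G) y).Nonempty →
      (rightCosetSet (Q : Set G) x ∩ rightCosetSet (K : Set G) z).Nonempty →
      (rightCosetSet (H : Set G) y ∩ rightCosetSet (K : Set G) z).Nonempty →
      (rightCosetSet (Q : Set G) x ∩ rightCosetSet (H : Set G) y ∩
        rightCosetSet (K : Set G) z).Nonempty := by
  have hsub : (Q : Set G) * ((H : Set G) ∩ (K : Set G)) ⊆
      ((Q : Set G) * (H : Set G)) ∩ ((Q : Set G) * (K : Set G)) := by
    rintro g ⟨q, hq, w, ⟨hwH, hwK⟩, rfl⟩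
    exact ⟨⟨q, hq, w, hwH, rfl⟩, ⟨q, hq, w, hwK, rfl⟩⟩
  constructor
  · intro hEq x y z h1 h2 h3
    obtain ⟨a, ⟨q, hq, hqa⟩, ⟨h, hh, hha⟩⟩ := h1
    obtain ⟨b, ⟨q', hq', hqb⟩, ⟨k, hk, hkb⟩⟩ := h2
    obtain ⟨c, ⟨h', hh', hhc⟩, ⟨k', hk', hkc⟩⟩ := h3
    simp only at hqa hha hqb hkb hhc hkc
    have hA : q * x = h * y := hqa.trans hha.symm
    have hh2 : h = q * x * y⁻¹ := by
      rw [hA, mul_inv_cancel_right]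
    have hs : b * c⁻¹ ∈ ((Q : Set G) * (H : Set G)) ∩ ((Q : Set G) * (K : Set G)) := by
      constructor
      · refine ⟨q' * q⁻¹, mul_mem hq' (inv_mem hq), h * h'⁻¹,
          mul_mem hh (inv_mem hh'), ?_⟩
        rw [← hqb, ← hhc, hh2]
        group
      · refine ⟨1, one_mem _, k * k'⁻¹, mul_mem hk (inv_mem hk'), ?_⟩
        rw [← hkb, ← hkc]
        group
    rw [hEq] at hs
    obtain ⟨q₀, hq₀, w, ⟨hwH, hwK⟩, hsw⟩ := hs
    dsimp only at hsw
    have hb : q₀ * w * c = b := by rw [hsw]; group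
    refine ⟨q₀⁻¹ * b, ⟨⟨q₀⁻¹ * q', mul_mem (inv_mem hq₀) hq', ?_⟩,
      ⟨w * h', mul_mem hwH hh', ?_⟩⟩, ⟨w * k', mul_mem hwK hk', ?_⟩⟩
    · simp only
      rw [← hqb]; group
    · simp only
      rw [← hb, ← hhc]; group
    · simp only
      rw [← hb, ← hkc]; group
  · intro hTri
    refine Set.Subset.antisymm ?_ hsub
    rintro g ⟨⟨q, hq, h, hh, rfl⟩, ⟨q', hq', k, hk, hgk⟩⟩
    dsimp only at hgk ⊢
    have t1 : (rightCosetSet (Q : Set G) (q * h) ∩ rightCosetSet (H : Set G) 1).Nonempty :=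
      ⟨h, ⟨q⁻¹, inv_mem hq, by simp⟩, ⟨h, hh, mul_one h⟩⟩
    have t2 : (rightCosetSet (Q : Set G) (q * h) ∩ rightCosetSet (K : Set G) 1).Nonempty :=
      ⟨k, ⟨q'⁻¹, inv_mem hq', by simp only; rw [← hgk]; group⟩, ⟨k, hk, mul_one k⟩⟩
    have t3 : (rightCosetSet (H : Set G) 1 ∩ rightCosetSet (K : Set G) 1).Nonempty :=
      ⟨1, ⟨1, one_mem _, mul_one 1⟩, ⟨1, one_mem _, mul_one 1⟩⟩
    obtain ⟨w, ⟨⟨q₁, hq₁, hw1⟩, ⟨h₁, hh₁, hw2⟩⟩, ⟨k₁, hk₁, hw3⟩⟩ := hTri (q * h) 1 1 t1 t2 t3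
    simp only [mul_one] at hw1 hw2 hw3
    subst hw2
    refine ⟨q₁⁻¹, inv_mem hq₁, h₁, ⟨hh₁, hw3 ▸ hk₁⟩, ?_⟩
    rw [← hw1]; group
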